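/- arXiv:1610.05365 — 2 statements merged into one kernel-verified Lean document; each statement's English description precedes it below -/
import Mathlib

section
/- If L is an indecomposable almost Abelian Lie algebra with dim [L,L] = 1, then L is isomorphic either to the 2-dimensional non-Abelian Lie algebra ax+b or to the 3-dimensional Heisenberg algebra H_F. -/
variable {F : Type*} [Field F] {V : Type*} [AddCommGroup V] [Module F V]

/-- The almost Abelian Lie algebra `F e₀ ⋉ V` determined by the operator `T = ad_{e₀}|_V`:
the underlying vector space is `F × V`, with bracket `[(t,v),(s,w)] = (0, t • T w - s • T v)`. -/
def AA (F V : Type*) [Field F] [AddCommGroup V] [Module F V] (_T : Module.End F V) : Type _ :=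
  F × V

namespace AA

variable {T : Module.End F V}

instance : AddCommGroup (AA F V T) := inferInstanceAs (AddCommGroup (F × V))
instance : Module F (AA F V T) := inferInstanceAs (Module F (F × V))

instance : LieRing (AA F V T) where
  bracket := fun (x y : F × V) => (((0 : F), x.1 • T y.2 - y.1 • T x.2) : F × V)
  add_lie := by
    rintro ⟨a, u⟩ ⟨b, v⟩ ⟨c, w⟩
    show (((0 : F), (a + b) • T w - c • T (u + v)) : F × V)
      = (((0 : F), a • T w - c • T u) : F × V) + (((0 : F), b • T w - c • T v) : F × V)
    ext
    · simp
    · show (a + b) • T w - c • T (u + v) = (a • T w - c • T u) + (b • T w - c • T v)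
      simp only [map_add, smul_add, add_smul]
      module
  lie_add := by
    rintro ⟨a, u⟩ ⟨b, v⟩ ⟨c, w⟩
    show (((0 : F), a • T (v + w) - (b + c) • T u) : F × V)
      = (((0 : F), a • T v - b • T u) : F × V) + (((0 : F), a • T w - c • T u) : F × V)
    ext
    · simp
    · show a • T (v + w) - (b + c) • T u = (a • T v - b • T u) + (a • T w - c • T u)
      simp only [map_add, smul_add, add_smul]
      module
  lie_self := by
    rintro ⟨a, u⟩
    show (((0 : F), a • T u - a • T u) : F × V) = (0 : F × V)
    ext
    · simp
    · show a • T u - a • T u = (0 : V)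
      simp
  leibniz_lie := by
    rintro ⟨a, u⟩ ⟨b, v⟩ ⟨c, w⟩
    show (((0 : F), a • T (b • T w - c • T v) - (0 : F) • T u) : F × V)
      = (((0 : F), (0 : F) • T w - c • T (a • T v - b • T u)) : F × V)
        + (((0 : F), b • T (a • T w - c • T u) - (0 : F) • T v) : F × V)
    ext
    · simp
    · show a • T (b • T w - c • T v) - (0 : F) • T u
        = ((0 : F) • T w - c • T (a • T v - b • T u)) + (b • T (a • T w - c • T u) - (0 : F) • T v)
      simp only [map_sub, map_smul, zero_smul, smul_sub, smul_smul]
      module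

instance : LieAlgebra F (AA F V T) where
  lie_smul := by
    rintro r ⟨a, u⟩ ⟨b, v⟩
    show (((0 : F), a • T (r • v) - (r • b) • T u) : F × V)
      = r • (((0 : F), a • T v - b • T u) : F × V)
    ext
    · simp
    · show a • T (r • v) - (r • b) • T u = r • (a • T v - b • T u)
      simp only [map_smul, smul_sub, smul_smul, smul_eq_mul]
      module

/-- The distinguished element `e₀`. -/
def e0 (T : Module.End F V) : AA F V T := ((1, 0) : F × V)

/-- The inclusion of the Abelian ideal `V` into `F e₀ ⋉ V`. -/
def incl (T : Module.End F V) : V →ₗ[F] AA F V T where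
  toFun v := ((0, v) : F × V)
  map_add' u v := by
    show (((0 : F), u + v) : F × V) = (((0 : F), u) : F × V) + (((0 : F), v) : F × V)
    ext <;> simp
  map_smul' r v := by
    show (((0 : F), r • v) : F × V) = r • (((0 : F), v) : F × V)
    ext <;> simp

@[simp] lemma bracket_e0_incl (v : V) : ⁅e0 T, incl T v⁆ = incl T (T v) := by
  show (((0 : F), (1 : F) • T v - (0 : F) • T (0 : V)) : F × V) = (((0 : F), T v) : F × V)
  ext <;> simp

end AA


/-- A Lie algebra is almost Abelian if it is non-Abelian and possesses an Abelian ideal of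
codimension 1 (as an `F`-vector subspace). -/
def IsAlmostAbelian (F L : Type*) [Field F] [LieRing L] [LieAlgebra F L] : Prop :=
  ¬IsLieAbelian L ∧
    ∃ I : LieIdeal F L, IsLieAbelian I ∧ Module.rank F (L ⧸ I.toSubmodule) = 1

/-- A Lie algebra is indecomposable if it is not the direct sum of two nonzero ideals. -/
def LieIndecomposable (F L : Type*) [Field F] [LieRing L] [LieAlgebra F L] : Prop :=
  ¬∃ (I J : LieIdeal F L), I ≠ ⊥ ∧ J ≠ ⊥ ∧ I ⊓ J = ⊥ ∧ I ⊔ J = ⊤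

/-- The operator defining the Heisenberg algebra: `T (a, b) = (b, 0)`. -/
def heisT (F : Type*) [Field F] : Module.End F (F × F) :=
  (LinearMap.snd F F F).prod 0

/-- The Heisenberg Lie algebra `H_F`, with basis `e₀, e₁ = ((0,(1,0)))`, `e₂ = ((0,(0,1)))` and
relations `[e₀, e₂] = e₁`, `[e₀, e₁] = [e₁, e₂] = 0`. -/
abbrev Heisenberg (F : Type*) [Field F] : Type _ := AA F (F × F) (heisT F)

/-- The 2-dimensional non-Abelian Lie algebra `ax+b`, with `[e₀, e₁] = e₁`. -/
abbrev axb (F : Type*) [Field F] : Type _ := AA F F (1 : Module.End F F)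


section MyAux

variable {F : Type*} [Field F]

private theorem exists_coord' {M : Type*} [AddCommGroup M] [Module F M]
    (h : Module.rank F M = 1) :
    ∃ (v : M) (ℓ : M →ₗ[F] F), v ≠ 0 ∧ ℓ v = 1 ∧ ∀ x : M, ℓ x • v = x := by
  obtain ⟨v, hv0, hgen⟩ := rank_eq_one_iff.mp h
  have hbij : Function.Bijective (LinearMap.toSpanSingleton F M v) := by
    refine ⟨smul_left_injective F hv0, fun x => ?_⟩
    obtain ⟨c, hc⟩ := hgen x
    exact ⟨c, hc⟩
  let e := LinearEquiv.ofBijective _ hbij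
  refine ⟨v, e.symm.toLinearMap, hv0, ?_, fun x => ?_⟩
  · have h1 : e 1 = v := by
      simp [e, LinearEquiv.ofBijective_apply, LinearMap.toSpanSingleton_apply]
    calc (e.symm.toLinearMap) v = e.symm (e 1) := by rw [h1]; rfl
      _ = 1 := e.symm_apply_apply 1
  · show e.symm x • v = x
    have h3 : e (e.symm x) = e.symm x • v := rfl
    rw [← h3]
    exact e.apply_symm_apply x

private def adRestrict {L : Type*} [LieRing L] [LieAlgebra F L] (D : LieIdeal F L)
    (e₀ : L) (hmem : ∀ x : L, ⁅e₀, x⁆ ∈ D) : L →ₗ[F] D :=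
  { toFun := fun x => ⟨⁅e₀, x⁆, hmem x⟩,
    map_add' := fun x y => Subtype.ext (by simp),
    map_smul' := fun c x => Subtype.ext (by simp) }

private theorem adRestrict_apply {L : Type*} [LieRing L] [LieAlgebra F L] (D : LieIdeal F L)
    (e₀ : L) (hmem : ∀ x : L, ⁅e₀, x⁆ ∈ D) (x : L) :
    ((adRestrict D e₀ hmem x : D) : L) = ⁅e₀, x⁆ := rfl

private def lieEquivOfLinear {L₁ L₂ : Type*} [LieRing L₁] [LieAlgebra F L₁] [LieRing L₂]
    [LieAlgebra F L₂] (e : L₁ ≃ₗ[F] L₂) (h : ∀ x y, e ⁅x, y⁆ = ⁅e x, e y⁆) :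
    L₁ ≃ₗ⁅F⁆ L₂ :=
  { toLinearMap := e.toLinearMap
    map_lie' := @fun x y => h x y
    invFun := e.symm
    left_inv := e.left_inv
    right_inv := e.right_inv }

end MyAux

/-- An indecomposable almost Abelian Lie algebra with 1-dimensional derived algebra `[L,L]` is
isomorphic either to `ax+b` or to the Heisenberg algebra. -/
theorem stmt17 (F L : Type*) [Field F] [LieRing L] [LieAlgebra F L]
    (hL : IsAlmostAbelian F L) (hind : LieIndecomposable F L)
    (hdim : Module.rank F (⁅(⊤ : LieIdeal F L), (⊤ : LieIdeal F L)⁆ : LieIdeal F L) = 1) :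
    Nonempty (L ≃ₗ⁅F⁆ axb F) ∨ Nonempty (L ≃ₗ⁅F⁆ Heisenberg F) := by
  obtain ⟨-, I, hIab, hIrank⟩ := hL
  obtain ⟨v₀, ℓq, hv₀0, hℓv₀, hℓgen⟩ := exists_coord' hIrank
  obtain ⟨e₀, he₀⟩ := Submodule.mkQ_surjective I.toSubmodule v₀
  obtain ⟨g, hge₀, hgI, hmemg⟩ : ∃ g : L →ₗ[F] F,
      g e₀ = 1 ∧ (∀ x ∈ I, g x = 0) ∧ (∀ x : L, x - g x • e₀ ∈ I) := by
    refine ⟨ℓq ∘ₗ I.toSubmodule.mkQ, ?_, ?_, ?_⟩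
    · simp [he₀, hℓv₀]
    · intro x hx
      have hx' : I.toSubmodule.mkQ x = 0 := by
        rw [Submodule.mkQ_apply, Submodule.Quotient.mk_eq_zero]
        exact hx
      simp [hx']
    · intro x
      have h2 : ℓq (I.toSubmodule.mkQ x) • v₀ = I.toSubmodule.mkQ x := hℓgen _
      have h1 : I.toSubmodule.mkQ (x - (ℓq ∘ₗ I.toSubmodule.mkQ) x • e₀) = 0 := by
        rw [map_sub, map_smul, he₀]
        simp only [LinearMap.comp_apply]
        rw [sub_eq_zero]
        exact h2.symm
      rw [Submodule.mkQ_apply, Submodule.Quotient.mk_eq_zero] at h1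
      exact h1
  set D : LieIdeal F L := ⁅(⊤ : LieIdeal F L), (⊤ : LieIdeal F L)⁆ with hDdef
  obtain ⟨w', ℓD, hw'0, hℓw', hℓDgen⟩ := exists_coord' hdim
  have hmemD : ∀ x : L, ⁅e₀, x⁆ ∈ D := fun x =>
    LieSubmodule.lie_mem_lie (LieSubmodule.mem_top e₀) (LieSubmodule.mem_top x)
  set w : L := (w' : L) with hwdef
  have hw0 : w ≠ 0 := fun h => hw'0 (Subtype.ext h)
  have hwD : w ∈ D := w'.2
  obtain ⟨f, hf⟩ : ∃ f : L →ₗ[F] F, ∀ x : L, ⁅e₀, x⁆ = f x • w := by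
    refine ⟨ℓD ∘ₗ adRestrict D e₀ hmemD, fun x => ?_⟩
    have h2 := hℓDgen (adRestrict D e₀ hmemD x)
    have h3 := congrArg (fun z : D => (z : L)) h2
    simpa [adRestrict_apply, hwdef] using h3.symm
  have hfe₀ : f e₀ = 0 := by
    have h := (hf e₀).symm
    rw [lie_self] at h
    rcases smul_eq_zero.mp h with h | h
    · exact h
    · exact absurd h hw0
  have habI : ∀ u, u ∈ I → ∀ v, v ∈ I → ⁅u, v⁆ = (0 : L) := by
    intro u hu v hv
    have h : (⁅(⟨u, hu⟩ : I), (⟨v, hv⟩ : I)⁆ : I) = 0 :=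
      trivial_lie_zero (↥I) (↥I) ⟨u, hu⟩ ⟨v, hv⟩
    have h2 : ((⁅(⟨u, hu⟩ : I), (⟨v, hv⟩ : I)⁆ : I) : L) = 0 := by rw [h]; rfl
    have h3 : ⁅u, v⁆ = ((⁅(⟨u, hu⟩ : I), (⟨v, hv⟩ : I)⁆ : I) : L) := rfl
    exact h3.trans h2
  have hDI : ∀ x y : L, ⁅x, y⁆ ∈ I := by
    intro x y
    have h1 : ⁅e₀, y⁆ ∈ I := by
      have h2 : ⁅e₀, y⁆ = g y • ⁅e₀, e₀⁆ + ⁅e₀, y - g y • e₀⁆ := by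
        rw [lie_sub, lie_smul]; abel
      rw [h2, lie_self, smul_zero, zero_add]
      exact I.lie_mem (hmemg y)
    have h3 : ⁅x, y⁆ = g x • ⁅e₀, y⁆ + ⁅x - g x • e₀, y⁆ := by
      rw [sub_lie, smul_lie]; abel
    have h4 : ⁅x - g x • e₀, y⁆ ∈ I := by
      rw [← lie_skew]
      exact neg_mem (I.lie_mem (hmemg x))
    rw [h3]
    exact add_mem (I.smul_mem _ h1) h4
  have hwI : w ∈ I := by
    have hle : D ≤ I := by
      rw [hDdef, LieSubmodule.lieIdeal_oper_eq_span, LieSubmodule.lieSpan_le]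
      rintro m ⟨x, n, rfl⟩
      exact hDI x n
    exact hle hwD
  have hgw : g w = 0 := hgI w hwI
  have key : ∀ x y : L, ⁅x, y⁆ = (g x * f y - g y * f x) • w := by
    intro x y
    have e1 : ⁅x, y⁆ = g y • ⁅x, e₀⁆ + ⁅x, y - g y • e₀⁆ := by
      rw [lie_sub, lie_smul]; abel
    have e2 : ⁅x, e₀⁆ = -(f x • w) := by
      rw [← lie_skew, hf x]
    have e3 : ⁅x, y - g y • e₀⁆
        = g x • ⁅e₀, y - g y • e₀⁆ + ⁅x - g x • e₀, y - g y • e₀⁆ := by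
      rw [sub_lie, smul_lie]; abel
    have e4 : ⁅x - g x • e₀, y - g y • e₀⁆ = 0 := habI _ (hmemg x) _ (hmemg y)
    have e5 : ⁅e₀, y - g y • e₀⁆ = f y • w := by
      rw [hf (y - g y • e₀), map_sub, map_smul, hfe₀]
      simp
    rw [e1, e2, e3, e4, e5]
    module
  rcases eq_or_ne (f w) 0 with hlam | hlam
  · -- Heisenberg case
    refine Or.inr ?_
    have hfne : ∃ x₁ : L, f x₁ ≠ 0 := by
      by_contra h
      push_neg at h
      have hD0 : D ≤ (⊥ : LieIdeal F L) := by
        rw [hDdef, LieSubmodule.lieIdeal_oper_eq_span, LieSubmodule.lieSpan_le]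
        rintro m ⟨x, n, rfl⟩
        have hz : ⁅(x : L), (n : L)⁆ = 0 := by rw [key]; simp [h]
        exact (LieSubmodule.mem_bot _).mpr hz
      exact hw0 ((LieSubmodule.mem_bot w).mp (hD0 hwD))
    obtain ⟨x₁, hx₁⟩ := hfne
    set u : L := (f x₁)⁻¹ • (x₁ - g x₁ • e₀) with hu
    have hfu : f u = 1 := by
      rw [hu, map_smul, map_sub, map_smul, hfe₀]
      field_simp
      simp [hx₁]
    have hgu : g u = 0 := by
      rw [hu, map_smul, map_sub, map_smul, hge₀]
      simp
    obtain ⟨P, hP⟩ := Submodule.exists_isCompl (Submodule.span F {w})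
    obtain ⟨C, hCmem⟩ : ∃ C : LieIdeal F L,
        ∀ m : L, m ∈ C ↔ ((f m = 0 ∧ g m = 0) ∧ m ∈ P) := by
      refine ⟨⟨(LinearMap.ker f ⊓ LinearMap.ker g) ⊓ P, ?_⟩, ?_⟩
      · intro x m hm
        have hm1 : m ∈ (LinearMap.ker f ⊓ LinearMap.ker g) ⊓ P := hm
        rw [Submodule.mem_inf, Submodule.mem_inf, LinearMap.mem_ker, LinearMap.mem_ker] at hm1
        have hz : ⁅x, m⁆ = 0 := by rw [key]; simp [hm1.1.1, hm1.1.2]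
        have hgoal : ⁅x, m⁆ ∈ (LinearMap.ker f ⊓ LinearMap.ker g) ⊓ P := by
          rw [hz]; exact zero_mem _
        exact hgoal
      · intro m
        show m ∈ (LinearMap.ker f ⊓ LinearMap.ker g) ⊓ P ↔ _
        rw [Submodule.mem_inf, Submodule.mem_inf, LinearMap.mem_ker, LinearMap.mem_ker]
    obtain ⟨S, hSmem⟩ : ∃ S : LieIdeal F L,
        ∀ m : L, m ∈ S ↔ m ∈ Submodule.span F {e₀, u, w} := by
      refine ⟨⟨Submodule.span F {e₀, u, w}, ?_⟩, fun m => Iff.rfl⟩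
      intro x m hm
      have hgoal : ⁅x, m⁆ ∈ Submodule.span F {e₀, u, w} := by
        rw [key]
        exact Submodule.smul_mem _ _ (Submodule.subset_span (by simp))
      exact hgoal
    have hwS : w ∈ S := (hSmem w).mpr (Submodule.subset_span (by simp))
    have hSne : S ≠ ⊥ := fun h => hw0 ((LieSubmodule.eq_bot_iff S).mp h w hwS)
    have hinf : S ⊓ C = ⊥ := by
      rw [LieSubmodule.eq_bot_iff]
      intro m hm
      obtain ⟨hmS, hmC⟩ := (LieSubmodule.mem_inf S C m).mp hm
      obtain ⟨⟨hfm, hgm⟩, hmP⟩ := (hCmem m).mp hmC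
      obtain ⟨a, z, hz, hmz⟩ := Submodule.mem_span_insert.mp ((hSmem m).mp hmS)
      obtain ⟨b, c, hbc⟩ := Submodule.mem_span_pair.mp hz
      have hm' : m = a • e₀ + b • u + c • w := by rw [hmz, ← hbc]; abel
      have ha : a = 0 := by
        have h5 := hgm
        rw [hm'] at h5
        simpa [map_add, map_smul, hge₀, hgw, hgu] using h5
      have hb : b = 0 := by
        have h5 := hfm
        rw [hm'] at h5
        simpa [map_add, map_smul, hfe₀, hlam, hfu] using h5
      have hmw : m = c • w := by rw [hm', ha, hb]; simp
      have h6 : m ∈ Submodule.span F {w} ⊓ P := by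
        refine Submodule.mem_inf.mpr ⟨?_, hmP⟩
        rw [hmw]
        exact Submodule.smul_mem _ _ (Submodule.mem_span_singleton_self w)
      rw [hP.inf_eq_bot] at h6
      exact (Submodule.mem_bot F).mp h6
    have hKdecomp : ∀ y : L, f y = 0 → g y = 0 →
        ∃ (c : F) (p : L), p ∈ C ∧ y = c • w + p := by
      intro y h1 h2
      have hy : y ∈ Submodule.span F {w} ⊔ P := by
        rw [hP.sup_eq_top]; exact Submodule.mem_top
      obtain ⟨cw, hcw, p, hp, hsum⟩ := Submodule.mem_sup.mp hy
      obtain ⟨c, hc⟩ := Submodule.mem_span_singleton.mp hcw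
      have hpy : p = y - cw := by rw [← hsum]; abel
      have hfp : f p = 0 := by
        rw [hpy, ← hc, map_sub, map_smul, h1, hlam]
        simp
      have hgp : g p = 0 := by
        rw [hpy, ← hc, map_sub, map_smul, h2, hgw]
        simp
      refine ⟨c, p, (hCmem p).mpr ⟨⟨hfp, hgp⟩, hp⟩, ?_⟩
      rw [hc, hsum]
    have hsup : S ⊔ C = ⊤ := by
      rw [← LieSubmodule.toSubmodule_inj, LieSubmodule.sup_toSubmodule,
        LieSubmodule.top_toSubmodule, Submodule.eq_top_iff']
      intro x
      rw [Submodule.mem_sup]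
      have hy1 : f (x - g x • e₀ - f x • u) = 0 := by
        rw [map_sub, map_sub, map_smul, map_smul, hfe₀, hfu]
        simp
      have hy2 : g (x - g x • e₀ - f x • u) = 0 := by
        rw [map_sub, map_sub, map_smul, map_smul, hge₀, hgu]
        simp
      obtain ⟨c, p, hpC, hyp⟩ := hKdecomp _ hy1 hy2
      refine ⟨g x • e₀ + f x • u + c • w, ?_, p, ?_, ?_⟩
      · apply (LieSubmodule.mem_toSubmodule S).mpr
        refine (hSmem _).mpr ?_
        refine add_mem (add_mem ?_ ?_) ?_ <;>
          exact Submodule.smul_mem _ _ (Submodule.subset_span (by simp))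
      · exact (LieSubmodule.mem_toSubmodule C).mpr hpC
      · calc g x • e₀ + f x • u + c • w + p
            = g x • e₀ + f x • u + (c • w + p) := by abel
          _ = g x • e₀ + f x • u + (x - g x • e₀ - f x • u) := by rw [← hyp]
          _ = x := by abel
    have hCbot : C = ⊥ := by
      by_contra hC0
      exact hind ⟨S, C, hSne, hC0, hinf, hsup⟩
    have hKspan : ∀ y : L, f y = 0 → g y = 0 → ∃ c : F, y = c • w := by
      intro y h1 h2
      obtain ⟨c, p, hpC, hyp⟩ := hKdecomp y h1 h2
      rw [hCbot] at hpC
      rw [(LieSubmodule.mem_bot p).mp hpC, add_zero] at hyp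
      exact ⟨c, hyp⟩
    let ψ : Heisenberg F →ₗ[F] L :=
      { toFun := fun p => p.1 • e₀ + p.2.1 • w + p.2.2 • u
        map_add' := by
          intro p q
          show (p.1 + q.1) • e₀ + (p.2.1 + q.2.1) • w + (p.2.2 + q.2.2) • u = _
          module
        map_smul' := by
          intro c p
          show (c * p.1) • e₀ + (c * p.2.1) • w + (c * p.2.2) • u
            = c • (p.1 • e₀ + p.2.1 • w + p.2.2 • u)
          module }
    have hψ : ∀ p : F × (F × F), ψ p = p.1 • e₀ + p.2.1 • w + p.2.2 • u := fun _ => rfl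
    have hgψ : ∀ p : F × (F × F), g (ψ p) = p.1 := by
      intro p
      rw [hψ, map_add, map_add, map_smul, map_smul, map_smul, hge₀, hgw, hgu]
      simp
    have hfψ : ∀ p : F × (F × F), f (ψ p) = p.2.2 := by
      intro p
      rw [hψ, map_add, map_add, map_smul, map_smul, map_smul, hfe₀, hlam, hfu]
      simp
    have hker : ∀ p : F × (F × F), ψ p = 0 → p = 0 := by
      intro p hp
      have h1 : p.1 = 0 := by
        have h5 := hgψ p
        rw [hp, map_zero] at h5
        exact h5.symm
      have h2 : p.2.2 = 0 := by
        have h5 := hfψ p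
        rw [hp, map_zero] at h5
        exact h5.symm
      have h3 : p.2.1 • w = 0 := by
        have h5 := hψ p
        rw [hp, h1, h2] at h5
        simpa using h5.symm
      have h4 : p.2.1 = 0 := by
        rcases smul_eq_zero.mp h3 with h | h
        · exact h
        · exact absurd h hw0
      exact Prod.ext h1 (Prod.ext h4 h2)
    have hinj : Function.Injective ψ := by
      intro p q hpq
      have h5 := hker (p - q) (by rw [map_sub, hpq, sub_self])
      exact sub_eq_zero.mp h5
    have hsurj : Function.Surjective ψ := by
      intro x
      have hy1 : f (x - g x • e₀ - f x • u) = 0 := by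
        rw [map_sub, map_sub, map_smul, map_smul, hfe₀, hfu]
        simp
      have hy2 : g (x - g x • e₀ - f x • u) = 0 := by
        rw [map_sub, map_sub, map_smul, map_smul, hge₀, hgu]
        simp
      obtain ⟨c, hc⟩ := hKspan _ hy1 hy2
      refine ⟨(g x, (c, f x)), ?_⟩
      rw [hψ]
      show g x • e₀ + c • w + f x • u = x
      rw [← sub_eq_zero]
      rw [show g x • e₀ + c • w + f x • u - x = -((x - g x • e₀ - f x • u) - c • w) by abel]
      rw [← hc]
      simp
    let e := LinearEquiv.ofBijective ψ ⟨hinj, hsurj⟩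
    refine ⟨(lieEquivOfLinear e ?_).symm⟩
    intro p q
    show ψ ⁅p, q⁆ = ⁅ψ p, ψ q⁆
    have hbr : ⁅p, q⁆ = ((0, (p.1 * q.2.2 - q.1 * p.2.2, 0)) : F × (F × F)) := by
      show ((0, p.1 • heisT F q.2 - q.1 • heisT F p.2) : F × (F × F)) = _
      have h1 : heisT F q.2 = (q.2.2, 0) := rfl
      have h2 : heisT F p.2 = (p.2.2, 0) := rfl
      rw [h1, h2]
      refine Prod.ext rfl (Prod.ext rfl ?_)
      show p.1 • (0 : F) - q.1 • (0 : F) = 0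
      simp
    rw [key (ψ p) (ψ q), hgψ p, hgψ q, hfψ q, hfψ p, hbr, hψ]
    show (0 : F) • e₀ + (p.1 * q.2.2 - q.1 * p.2.2) • w + (0 : F) • u = _
    module
  · -- ax+b case
    refine Or.inl ?_
    obtain ⟨C, hCmem⟩ : ∃ C : LieIdeal F L,
        ∀ m : L, m ∈ C ↔ (f m = 0 ∧ g m = 0) := by
      refine ⟨⟨LinearMap.ker f ⊓ LinearMap.ker g, ?_⟩, ?_⟩
      · intro x m hm
        have hm1 : m ∈ LinearMap.ker f ⊓ LinearMap.ker g := hm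
        rw [Submodule.mem_inf, LinearMap.mem_ker, LinearMap.mem_ker] at hm1
        have hz : ⁅x, m⁆ = 0 := by rw [key]; simp [hm1.1, hm1.2]
        have hgoal : ⁅x, m⁆ ∈ LinearMap.ker f ⊓ LinearMap.ker g := by
          rw [hz]; exact zero_mem _
        exact hgoal
      · intro m
        show m ∈ LinearMap.ker f ⊓ LinearMap.ker g ↔ _
        rw [Submodule.mem_inf, LinearMap.mem_ker, LinearMap.mem_ker]
    obtain ⟨S, hSmem⟩ : ∃ S : LieIdeal F L,
        ∀ m : L, m ∈ S ↔ m ∈ Submodule.span F {e₀, w} := by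
      refine ⟨⟨Submodule.span F {e₀, w}, ?_⟩, fun m => Iff.rfl⟩
      intro x m hm
      have hgoal : ⁅x, m⁆ ∈ Submodule.span F {e₀, w} := by
        rw [key]
        exact Submodule.smul_mem _ _ (Submodule.subset_span (by simp))
      exact hgoal
    have hwS : w ∈ S := (hSmem w).mpr (Submodule.subset_span (by simp))
    have hSne : S ≠ ⊥ := fun h => hw0 ((LieSubmodule.eq_bot_iff S).mp h w hwS)
    have hinf : S ⊓ C = ⊥ := by
      rw [LieSubmodule.eq_bot_iff]
      intro m hm
      obtain ⟨hmS, hmC⟩ := (LieSubmodule.mem_inf S C m).mp hm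
      obtain ⟨hfm, hgm⟩ := (hCmem m).mp hmC
      obtain ⟨a, b, hab⟩ := Submodule.mem_span_pair.mp ((hSmem m).mp hmS)
      have ha : a = 0 := by
        have h5 := hgm
        rw [← hab] at h5
        simpa [map_add, map_smul, hge₀, hgw] using h5
      have hb : b = 0 := by
        have h5 := hfm
        rw [← hab] at h5
        have h6 : b * f w = 0 := by
          simpa [map_add, map_smul, hfe₀] using h5
        exact (mul_eq_zero.mp h6).resolve_right hlam
      rw [← hab, ha, hb]
      simp
    have hsup : S ⊔ C = ⊤ := by
      rw [← LieSubmodule.toSubmodule_inj, LieSubmodule.sup_toSubmodule,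
        LieSubmodule.top_toSubmodule, Submodule.eq_top_iff']
      intro x
      rw [Submodule.mem_sup]
      refine ⟨g x • e₀ + ((f w)⁻¹ * f x) • w, ?_,
        x - (g x • e₀ + ((f w)⁻¹ * f x) • w), ?_, by abel⟩
      · apply (LieSubmodule.mem_toSubmodule S).mpr
        exact (hSmem _).mpr (Submodule.mem_span_pair.mpr ⟨_, _, rfl⟩)
      · apply (LieSubmodule.mem_toSubmodule C).mpr
        refine (hCmem _).mpr ⟨?_, ?_⟩
        · rw [map_sub, map_add, map_smul, map_smul, hfe₀]
          field_simp
          simp [hlam]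
        · rw [map_sub, map_add, map_smul, map_smul, hge₀, hgw]
          simp
    have hCbot : C = ⊥ := by
      by_contra hC0
      exact hind ⟨S, C, hSne, hC0, hinf, hsup⟩
    have hCz : ∀ x : L, f x = 0 → g x = 0 → x = 0 := by
      intro x h1 h2
      have hx : x ∈ C := (hCmem x).mpr ⟨h1, h2⟩
      rw [hCbot] at hx
      exact (LieSubmodule.mem_bot x).mp hx
    let ψ : axb F →ₗ[F] L :=
      { toFun := fun p => ((f w)⁻¹ * p.1) • e₀ + p.2 • w
        map_add' := by
          intro p q
          show ((f w)⁻¹ * (p.1 + q.1)) • e₀ + (p.2 + q.2) • w = _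
          module
        map_smul' := by
          intro c p
          show ((f w)⁻¹ * (c * p.1)) • e₀ + (c * p.2) • w
            = c • (((f w)⁻¹ * p.1) • e₀ + p.2 • w)
          module }
    have hψ : ∀ p : F × F, ψ p = ((f w)⁻¹ * p.1) • e₀ + p.2 • w := fun _ => rfl
    have hgψ : ∀ p : F × F, g (ψ p) = (f w)⁻¹ * p.1 := by
      intro p
      rw [hψ, map_add, map_smul, map_smul, hge₀, hgw]
      simp
    have hfψ : ∀ p : F × F, f (ψ p) = p.2 * f w := by
      intro p
      rw [hψ, map_add, map_smul, map_smul, hfe₀]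
      simp [mul_comm]
    have hker : ∀ p : F × F, ψ p = 0 → p = 0 := by
      intro p hp
      have h1 : p.1 = 0 := by
        have h5 := hgψ p
        rw [hp, map_zero] at h5
        rcases mul_eq_zero.mp h5.symm with h | h
        · exact absurd h (inv_ne_zero hlam)
        · exact h
      have h2 : p.2 = 0 := by
        have h5 := hfψ p
        rw [hp, map_zero] at h5
        exact (mul_eq_zero.mp h5.symm).resolve_right hlam
      exact Prod.ext h1 h2
    have hinj : Function.Injective ψ := by
      intro p q hpq
      have h5 := hker (p - q) (by rw [map_sub, hpq, sub_self])
      exact sub_eq_zero.mp h5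
    have hsurj : Function.Surjective ψ := by
      intro x
      refine ⟨(f w * g x, (f w)⁻¹ * f x), ?_⟩
      have h0 : ψ (f w * g x, (f w)⁻¹ * f x) = g x • e₀ + ((f w)⁻¹ * f x) • w := by
        rw [hψ]
        congr 2
        field_simp
      have hdz : x - (g x • e₀ + ((f w)⁻¹ * f x) • w) = 0 := by
        apply hCz
        · rw [map_sub, map_add, map_smul, map_smul, hfe₀]
          field_simp
          simp [hlam]
        · rw [map_sub, map_add, map_smul, map_smul, hge₀, hgw]
          simp
      rw [h0]
      exact (sub_eq_zero.mp hdz).symm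
    let e := LinearEquiv.ofBijective ψ ⟨hinj, hsurj⟩
    refine ⟨(lieEquivOfLinear e ?_).symm⟩
    intro p q
    show ψ ⁅p, q⁆ = ⁅ψ p, ψ q⁆
    have hbr : ⁅p, q⁆ = ((0, p.1 * q.2 - q.1 * p.2) : F × F) := rfl
    rw [key (ψ p) (ψ q), hgψ p, hgψ q, hfψ q, hfψ p, hbr, hψ]
    have hc : (f w)⁻¹ * p.1 * (q.2 * f w) - (f w)⁻¹ * q.1 * (p.2 * f w)
        = p.1 * q.2 - q.1 * p.2 := by
      field_simp
    rw [hc]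
    show ((f w)⁻¹ * 0) • e₀ + (p.1 * q.2 - q.1 * p.2) • w = _
    module
end

section
/- If every derivation of an almost Abelian Lie algebra L is inner (i.e., Der(L) = ad_L), then L is isomorphic to the 2-dimensional non-Abelian Lie algebra ax+b. -/
variable {F : Type*} [Field F] {V : Type*} [AddCommGroup V] [Module F V]

/-- If every derivation of an almost Abelian Lie algebra `L` is inner then `L` is isomorphic to
the 2-dimensional non-Abelian Lie algebra `ax+b`. -/
theorem stmt18 (F L : Type*) [Field F] [LieRing L] [LieAlgebra F L]
    (hL : IsAlmostAbelian F L)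
    (hder : ∀ D : LieDerivation F L L, ∃ x : L, D = LieDerivation.ad F L x) :
    Nonempty (L ≃ₗ⁅F⁆ axb F) := by
  classical
  obtain ⟨hnab, I, hIab, hrank⟩ := hL
  -- the ideal is abelian inside L
  have habI : ∀ u v : L, u ∈ I → v ∈ I → ⁅u, v⁆ = 0 := by
    intro u v hu hv
    have h0 : (⁅(⟨u, hu⟩ : I), (⟨v, hv⟩ : I)⁆ : I) = 0 := trivial_lie_zero _ _ _ _
    exact congrArg Subtype.val h0
  -- a linear functional with kernel I
  obtain ⟨ψ⟩ : Nonempty ((L ⧸ I.toSubmodule) ≃ₗ[F] F) := by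
    apply nonempty_linearEquiv_of_lift_rank_eq
    rw [hrank, Module.rank_self]
    simp
  set φ : L →ₗ[F] F := ψ.toLinearMap ∘ₗ I.toSubmodule.mkQ with hφdef
  have hker : ∀ y : L, φ y = 0 ↔ y ∈ I := by
    intro y
    rw [hφdef]
    simp only [LinearMap.comp_apply, LinearEquiv.coe_coe, LinearEquiv.map_eq_zero_iff,
      Submodule.mkQ_apply, Submodule.Quotient.mk_eq_zero]
    exact Iff.rfl
  obtain ⟨x₀, hx₀⟩ : ∃ x₀ : L, φ x₀ = 1 := by
    obtain ⟨y, hy⟩ := I.toSubmodule.mkQ_surjective (ψ.symm 1)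
    refine ⟨y, ?_⟩
    rw [hφdef]
    simp [hy]
  have hmem : ∀ y : L, y - φ y • x₀ ∈ I := by
    intro y
    refine (hker _).1 ?_
    simp [map_sub, map_smul, hx₀]
  let p : L →ₗ[F] I :=
    { toFun := fun y => ⟨y - φ y • x₀, hmem y⟩
      map_add' := fun a b => Subtype.ext (by
        show (a + b) - φ (a + b) • x₀ = (a - φ a • x₀) + (b - φ b • x₀)
        rw [map_add, add_smul]; abel)
      map_smul' := fun r a => Subtype.ext (by
        show (r • a) - φ (r • a) • x₀ = r • (a - φ a • x₀)
        rw [map_smul, smul_sub, smul_eq_mul, mul_smul]) }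
  let T : Module.End F I :=
    { toFun := fun v => ⟨⁅x₀, (v : L)⁆, I.lie_mem v.2⟩
      map_add' := fun u v => Subtype.ext (by
        show ⁅x₀, ((u + v : I) : L)⁆ = ⁅x₀, (u : L)⁆ + ⁅x₀, (v : L)⁆
        rw [LieSubmodule.coe_add, lie_add])
      map_smul' := fun r v => Subtype.ext (by
        show ⁅x₀, ((r • v : I) : L)⁆ = r • ⁅x₀, (v : L)⁆
        rw [LieSubmodule.coe_smul, lie_smul]) }
  have hφI : ∀ v : I, φ (v : L) = 0 := fun v => (hker _).2 v.2
  have hTcoe : ∀ v : I, ((T v : I) : L) = ⁅x₀, (v : L)⁆ := fun v => rfl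
  have hpcoe : ∀ y : L, ((p y : I) : L) = y - φ y • x₀ := fun y => rfl
  have hpI : ∀ v : I, p (v : L) = v := fun v => Subtype.ext (by
    rw [hpcoe, hφI, zero_smul, sub_zero])
  have hpx₀ : p x₀ = 0 := Subtype.ext (by rw [hpcoe, hx₀, one_smul, sub_self]; rfl)
  have hdecomp : ∀ y : L, y = φ y • x₀ + ((p y : I) : L) := by
    intro y
    rw [hpcoe]
    abel
  have hbr : ∀ x y : L, ⁅x, y⁆ = φ x • ((T (p y) : I) : L) - φ y • ((T (p x) : I) : L) := by
    intro x y
    conv_lhs => rw [hdecomp x, hdecomp y]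
    rw [add_lie, lie_add, lie_add, smul_lie, smul_lie, lie_smul, lie_smul, lie_self,
      habI _ _ (p x).2 (p y).2, hTcoe, hTcoe, ← lie_skew ((p x : I) : L) x₀]
    module
  have hbrI : ∀ x y : L, ⁅x, y⁆ = ((φ x • T (p y) - φ y • T (p x) : I) : L) := by
    intro x y
    rw [hbr x y, LieSubmodule.coe_sub, LieSubmodule.coe_smul, LieSubmodule.coe_smul]
  have hpbr : ∀ x y : L, p ⁅x, y⁆ = φ x • T (p y) - φ y • T (p x) := by
    intro x y
    rw [hbrI x y, hpI]
  let ι : I →ₗ[F] L :=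
    { toFun := Subtype.val
      map_add' := fun _ _ => rfl
      map_smul' := fun _ _ => rfl }
  -- the key step : every endomorphism commuting with T is a scalar multiple of T
  have key : ∀ S : Module.End F I, (∀ v, S (T v) = T (S v)) → ∃ c : F, ∀ v : I, S v = c • T v := by
    intro S hST
    have Dleib : ∀ a b : L, (ι ∘ₗ ((S : I →ₗ[F] I) ∘ₗ p)) ⁅a, b⁆ =
        ⁅a, (ι ∘ₗ ((S : I →ₗ[F] I) ∘ₗ p)) b⁆ - ⁅b, (ι ∘ₗ ((S : I →ₗ[F] I) ∘ₗ p)) a⁆ := by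
      intro a b
      show ((S (p ⁅a, b⁆) : I) : L) = ⁅a, ((S (p b) : I) : L)⁆ - ⁅b, ((S (p a) : I) : L)⁆
      rw [hpbr a b, hbr a ((S (p b) : I) : L), hbr b ((S (p a) : I) : L), hpI, hpI,
        hφI, hφI, map_sub, map_smul, map_smul, hST, hST, LieSubmodule.coe_sub,
        LieSubmodule.coe_smul, LieSubmodule.coe_smul, zero_smul, zero_smul]
      abel
    obtain ⟨z, hz⟩ := hder { toLinearMap := ι ∘ₗ ((S : I →ₗ[F] I) ∘ₗ p), leibniz' := Dleib }
    have happ : ∀ y : L, ((S (p y) : I) : L) = ⁅z, y⁆ := by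
      intro y
      have h2 := congrArg (fun D : LieDerivation F L L => D y) hz
      simp at h2
      exact h2
    have h1 : ⁅z, x₀⁆ = 0 := by
      rw [← happ x₀, hpx₀, map_zero, LieSubmodule.coe_zero]
    have h2 : ((T (p z) : I) : L) = 0 := by
      have h3 := hbr z x₀
      rw [h1, hpx₀, map_zero, hx₀, one_smul, LieSubmodule.coe_zero, smul_zero, zero_sub] at h3
      exact neg_eq_zero.mp h3.symm
    have h2' : T (p z) = 0 := Subtype.ext (by rw [h2]; rfl)
    refine ⟨φ z, fun v => ?_⟩
    have h3 := happ (v : L)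
    rw [hpI] at h3
    have h4 := hbr z (v : L)
    rw [hφI, hpI, zero_smul, sub_zero] at h4
    apply Subtype.ext
    rw [h3, h4, LieSubmodule.coe_smul]
  -- T is nonzero since L is not abelian
  have hTne : ∃ v₀ : I, T v₀ ≠ 0 := by
    by_contra h
    push_neg at h
    refine hnab ⟨fun x y => ?_⟩
    rw [hbr x y, h, h, LieSubmodule.coe_zero, smul_zero, smul_zero, sub_zero]
  obtain ⟨v₀, hv₀T⟩ := hTne
  obtain ⟨c, hc⟩ := key 1 (fun v => rfl)
  have hc1 : ∀ v : I, v = c • T v := by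
    intro v
    have := hc v
    rwa [Module.End.one_apply] at this
  have hc0 : c ≠ 0 := by
    intro h
    apply hv₀T
    have h5 := hc1 v₀
    rw [h, zero_smul] at h5
    rw [h5, map_zero]
  have hTsc : ∀ v : I, T v = c⁻¹ • v := by
    intro v
    calc T v = c⁻¹ • (c • T v) := by rw [smul_smul, inv_mul_cancel₀ hc0, one_smul]
      _ = c⁻¹ • v := by rw [← hc1 v]
  have hv₀ : v₀ ≠ 0 := by
    intro h
    apply hv₀T
    rw [h, map_zero]
  -- I is one-dimensional, spanned by v₀
  have hspan : ∀ w : I, ∃ r : F, r • v₀ = w := by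
    intro w
    by_contra hw
    push_neg at hw
    have hwn : w ∉ Submodule.span F {v₀} := by
      rw [Submodule.mem_span_singleton]
      push_neg
      exact hw
    obtain ⟨f, hfw, hfbot⟩ := Submodule.exists_dual_map_eq_bot_of_notMem hwn inferInstance
    have hfv₀ : f v₀ = 0 := by
      have h6 : f v₀ ∈ (Submodule.span F {v₀}).map f :=
        Submodule.mem_map_of_mem (Submodule.mem_span_singleton_self v₀)
      rw [hfbot] at h6
      exact (Submodule.mem_bot F).1 h6
    obtain ⟨c', hc'⟩ := key (f.smulRight v₀) (fun v => by
      rw [LinearMap.smulRight_apply, hTsc, hTsc, map_smul, smul_eq_mul, mul_smul]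
      rw [LinearMap.smulRight_apply, smul_comm])
    have e₁ := hc' v₀
    rw [LinearMap.smulRight_apply, hfv₀, zero_smul, hTsc, smul_smul] at e₁
    have hcc : c' * c⁻¹ = 0 := by
      rcases smul_eq_zero.1 e₁.symm with h | h
      · exact h
      · exact absurd h hv₀
    have e₂ := hc' w
    rw [LinearMap.smulRight_apply, hTsc, smul_smul, hcc, zero_smul] at e₂
    rcases smul_eq_zero.1 e₂ with h | h
    · exact hfw h
    · exact absurd h hv₀
  -- build the isomorphism with ax+b
  let ιF : F →ₗ[F] I := LinearMap.toSpanSingleton F I v₀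
  have hιinj : Function.Injective ιF := smul_left_injective F hv₀
  have hιsurj : Function.Surjective ιF := fun w => hspan w
  let ε : F ≃ₗ[F] I := LinearEquiv.ofBijective ιF ⟨hιinj, hιsurj⟩
  let k : L →ₗ[F] F := ε.symm.toLinearMap ∘ₗ p
  have hkdef : ∀ y : L, k y = ε.symm (p y) := fun y => rfl
  have hεa : ∀ r : F, ((ε r : I) : L) = r • (v₀ : L) := fun r => by
    show ((ιF r : I) : L) = r • (v₀ : L)
    rw [LinearMap.toSpanSingleton_apply, LieSubmodule.coe_smul]
  have hk : ∀ y : L, p y = k y • v₀ := by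
    intro y
    have h7 : ε (k y) = p y := by rw [hkdef]; exact ε.apply_symm_apply (p y)
    rw [← h7]
    show ιF (k y) = k y • v₀
    rw [LinearMap.toSpanSingleton_apply]
  -- the candidate linear equivalence L ≃ F × F
  let g : L →ₗ[F] F × F := LinearMap.prod (c⁻¹ • φ) k
  have hga : ∀ y : L, g y = (c⁻¹ * φ y, k y) := fun y => rfl
  have hginj : Function.Injective g := by
    rw [injective_iff_map_eq_zero]
    intro y hy
    rw [hga] at hy
    have hy1 : c⁻¹ * φ y = 0 := congrArg Prod.fst hy
    have hy2 : k y = 0 := congrArg Prod.snd hy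
    have hφy : φ y = 0 := by
      rcases mul_eq_zero.1 hy1 with h | h
      · exact absurd h (inv_ne_zero hc0)
      · exact h
    have hpy : p y = 0 := by rw [hk y, hy2, zero_smul]
    have := hdecomp y
    rw [hφy, zero_smul, zero_add, hpy] at this
    rw [this, LieSubmodule.coe_zero]
  have hgsurj : Function.Surjective g := by
    rintro ⟨a, b⟩
    refine ⟨(c * a) • x₀ + ((ε b : I) : L), ?_⟩
    have hφv : φ (((ε b : I) : L)) = 0 := hφI _
    have hpv : p ((c * a) • x₀ + ((ε b : I) : L)) = ε b := by
      rw [map_add, map_smul, hpx₀, smul_zero, zero_add, hpI]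
    rw [hga]
    have hφfull : φ ((c * a) • x₀ + ((ε b : I) : L)) = c * a := by
      rw [map_add, map_smul, hx₀, hφv, add_zero, smul_eq_mul, mul_one]
    rw [hφfull, hkdef, hpv, ε.symm_apply_apply]
    ext
    · show c⁻¹ * (c * a) = a
      field_simp
    · rfl
  let me : L ≃ₗ[F] (F × F) := LinearEquiv.ofBijective g ⟨hginj, hgsurj⟩
  -- bracket computation
  have hφbr : ∀ x y : L, φ ⁅x, y⁆ = 0 := by
    intro x y
    refine (hker _).2 ?_
    rw [hbrI x y]
    exact (φ x • T (p y) - φ y • T (p x)).2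
  have hkbr : ∀ x y : L, k ⁅x, y⁆ = c⁻¹ * (φ x * k y) - c⁻¹ * (φ y * k x) := by
    intro x y
    have h8 : p ⁅x, y⁆ = (c⁻¹ * (φ x * k y) - c⁻¹ * (φ y * k x)) • v₀ := by
      rw [hpbr, hTsc, hTsc, hk x, hk y]
      module
    have h9 := (hk ⁅x, y⁆).symm.trans h8
    exact smul_left_injective F hv₀ h9
  refine ⟨{ toLinearMap := (me : L →ₗ[F] F × F)
            map_lie' := ?_
            invFun := me.symm
            left_inv := me.left_inv
            right_inv := me.right_inv }⟩
  intro x y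
  show ((c⁻¹ * φ ⁅x, y⁆, k ⁅x, y⁆) : F × F)
    = (((0 : F), (c⁻¹ * φ x) • (1 : Module.End F F) (k y)
        - (c⁻¹ * φ y) • (1 : Module.End F F) (k x)) : F × F)
  rw [hφbr, hkbr]
  ext
  · show c⁻¹ * 0 = 0
    ring
  · show c⁻¹ * (φ x * k y) - c⁻¹ * (φ y * k x)
      = (c⁻¹ * φ x) • (1 : Module.End F F) (k y) - (c⁻¹ * φ y) • (1 : Module.End F F) (k x)
    rw [Module.End.one_apply, Module.End.one_apply, smul_eq_mul, smul_eq_mul]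
    ring
end
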